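/- arXiv:1801.08876 — 4 statements merged into one kernel-verified Lean document; each statement's English description precedes it below -/
import Mathlib

section
/- Let G be a finite graph in which every vertex has degree 1, 2 or 3, and let G' be the induced subgraph of G on the set of vertices of degree 1 or 3. Then E(G) can be partitioned into two (possibly empty) parts E₁ and E₂ such that E₁ is a 1-regular part and E₂ is a 2-regular part if and only if G' has a perfect matching, i.e., a set M of edges of G' such that every vertex of G' is incident to exactly one edge of M. -/
open SimpleGraph

variable {V : Type*}

/-- The degree of a vertex `v` in an edge part `E`: the number of edges of `E` incident to `v`. -/
noncomputable def partDeg (E : Set (Sym2 V)) (v : V) : ℕ :=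
  {e ∈ E | v ∈ e}.ncard

/-- A part is a matching if no two of its edges share a vertex. -/
def IsMatchingPart (E : Set (Sym2 V)) : Prop :=
  ∀ e ∈ E, ∀ f ∈ E, e ≠ f → ∀ v : V, v ∈ e → v ∉ f

/-- A part is locally irregular if the endpoints of each of its edges have distinct degrees. -/
def IsLocallyIrregularPart (E : Set (Sym2 V)) : Prop :=
  ∀ u v : V, s(u, v) ∈ E → partDeg E u ≠ partDeg E v

/-- A part is locally regular if the endpoints of each of its edges have equal degrees. -/
def IsLocallyRegularPart (E : Set (Sym2 V)) : Prop :=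
  ∀ u v : V, s(u, v) ∈ E → partDeg E u = partDeg E v

/-- A part is regular if all vertices incident to one of its edges have the same degree `r ≥ 1`. -/
def IsRegularPart (E : Set (Sym2 V)) : Prop :=
  ∃ r : ℕ, 1 ≤ r ∧ ∀ v : V, (∃ e ∈ E, v ∈ e) → partDeg E v = r

/-- A part is `r`-regular if every vertex incident to one of its edges has degree `r` in it. -/
def IsRegularPartOfDeg (r : ℕ) (E : Set (Sym2 V)) : Prop :=
  ∀ v : V, (∃ e ∈ E, v ∈ e) → partDeg E v = r

/-- A part is locally `k`-irregular if endpoint degrees of each edge differ by at least `k`. -/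
def IsLocallyKIrregularPart (k : ℕ) (E : Set (Sym2 V)) : Prop :=
  ∀ u v : V, s(u, v) ∈ E → (k : ℤ) ≤ |(partDeg E u : ℤ) - (partDeg E v : ℤ)|

/-- The maximum degree of a finite graph. -/
noncomputable def maxDeg [Fintype V] (G : SimpleGraph V) : ℕ :=
  Finset.univ.sup fun v => partDeg G.edgeSet v

lemma partDeg_union [Finite V] {E₁ E₂ : Set (Sym2 V)} (h : Disjoint E₁ E₂) (v : V) :
    partDeg (E₁ ∪ E₂) v = partDeg E₁ v + partDeg E₂ v := by
  unfold partDeg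
  have hset : {e ∈ E₁ ∪ E₂ | v ∈ e} = {e ∈ E₁ | v ∈ e} ∪ {e ∈ E₂ | v ∈ e} := by
    ext e; simp only [Set.mem_setOf_eq, Set.mem_union]; tauto
  rw [hset, Set.ncard_union_eq _ (Set.toFinite _) (Set.toFinite _)]
  exact Set.disjoint_left.mpr fun e he hf => Set.disjoint_left.mp h he.1 hf.1

lemma partDeg_pos [Finite V] {E : Set (Sym2 V)} {v : V} (h : ∃ e ∈ E, v ∈ e) :
    1 ≤ partDeg E v := by
  obtain ⟨e, he, hv⟩ := h
  exact (Set.ncard_pos (Set.toFinite _)).mpr ⟨e, he, hv⟩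

lemma partDeg_eq_zero [Finite V] {E : Set (Sym2 V)} {v : V} (h : ¬ ∃ e ∈ E, v ∈ e) :
    partDeg E v = 0 := by
  unfold partDeg
  rw [Set.ncard_eq_zero (Set.toFinite _)]
  ext e; simp only [Set.mem_setOf_eq, Set.mem_empty_iff_false, iff_false]
  exact fun he => h ⟨e, he.1, he.2⟩

/-- for a finite graph all of whose vertex degrees lie in {1, 2, 3}, with G' the
induced subgraph on the vertices of degree 1 or 3, the edge set of G decomposes into a
1-regular part and a 2-regular part iff G' has a perfect matching. -/
theorem stmt_12 {V : Type*} [Fintype V] (G : SimpleGraph V)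
    (hdeg : ∀ v : V, partDeg G.edgeSet v ∈ ({1, 2, 3} : Set ℕ)) :
    (∃ E₁ E₂ : Set (Sym2 V),
        E₁ ∪ E₂ = G.edgeSet ∧ Disjoint E₁ E₂ ∧
        IsRegularPartOfDeg 1 E₁ ∧ IsRegularPartOfDeg 2 E₂) ↔
      (∃ F : Set (Sym2 V),
        F ⊆ {e ∈ G.edgeSet | ∀ v : V, v ∈ e →
              (partDeg G.edgeSet v = 1 ∨ partDeg G.edgeSet v = 3)} ∧
        ∀ v : V, (partDeg G.edgeSet v = 1 ∨ partDeg G.edgeSet v = 3) →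
          partDeg F v = 1) := by
  constructor
  · rintro ⟨E₁, E₂, hunion, hdisj, h1, h2⟩
    have hsum : ∀ v : V, partDeg G.edgeSet v = partDeg E₁ v + partDeg E₂ v := by
      intro v; rw [← hunion, partDeg_union hdisj]
    have hE1 : ∀ v : V, partDeg E₁ v = 0 ∨ partDeg E₁ v = 1 := by
      intro v
      by_cases h : ∃ e ∈ E₁, v ∈ e
      · exact Or.inr (h1 v h)
      · exact Or.inl (partDeg_eq_zero h)
    have hE2 : ∀ v : V, partDeg E₂ v = 0 ∨ partDeg E₂ v = 2 := by
      intro v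
      by_cases h : ∃ e ∈ E₂, v ∈ e
      · exact Or.inr (h2 v h)
      · exact Or.inl (partDeg_eq_zero h)
    refine ⟨E₁, ?_, ?_⟩
    · intro e he
      refine ⟨hunion ▸ Set.mem_union_left _ he, fun v hv => ?_⟩
      have h1v : partDeg E₁ v = 1 := h1 v ⟨e, he, hv⟩
      rcases hE2 v with h' | h' <;> rw [hsum v, h1v, h'] <;> simp
    · intro v hv
      rw [hsum v] at hv
      rcases hE1 v with h' | h' <;> rcases hE2 v with h'' | h'' <;> omega
  · rintro ⟨F, hFsub, hFdeg⟩
    have hFE : F ⊆ G.edgeSet := fun e he => (hFsub he).1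
    have hdisj : Disjoint F (G.edgeSet \ F) := Set.disjoint_sdiff_right
    have hsum : ∀ v : V, partDeg G.edgeSet v = partDeg F v + partDeg (G.edgeSet \ F) v := by
      intro v; rw [← partDeg_union hdisj, Set.union_diff_cancel hFE]
    refine ⟨F, G.edgeSet \ F, Set.union_diff_cancel hFE, hdisj, ?_, ?_⟩
    · rintro v ⟨e, he, hv⟩
      exact hFdeg v ((hFsub he).2 v hv)
    · rintro v ⟨e, he, hv⟩
      have hpos : 1 ≤ partDeg (G.edgeSet \ F) v := partDeg_pos ⟨e, he, hv⟩
      have hd := hdeg v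
      simp only [Set.mem_insert_iff, Set.mem_singleton_iff] at hd
      by_cases h13 : partDeg G.edgeSet v = 1 ∨ partDeg G.edgeSet v = 3
      · have := hFdeg v h13
        have := hsum v
        omega
      · have hF0 : partDeg F v = 0 := by
          apply partDeg_eq_zero
          rintro ⟨f, hf, hvf⟩
          exact h13 ((hFsub hf).2 v hvf)
        have := hsum v
        omega
end

section
/- For every integer k ≥ 1 there exists a finite graph G such that E(G) admits a partition into locally k-irregular parts, and every partition of E(G) into locally k-irregular parts has at least 2k+1 parts; that is, h(k) ≥ 2k+1. -/
open SimpleGraph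

variable {V : Type*}

namespace S13

inductive Vtx (k : ℕ) where
  | w : Vtx k
  | u (i : Fin (2*k)) : Vtx k
  | l (i : Fin (2*k)) (s : Fin (k-1)) : Vtx k
  | p (i : Fin (2*k)) : Vtx k
  | z : Vtx k
  deriving DecidableEq, Fintype
variable (k : ℕ)
def star (i : Fin (2*k)) : Set (Sym2 (Vtx k)) :=
  insert s(Vtx.w, Vtx.u i) (insert s(Vtx.u i, Vtx.p i)
    (Set.range fun s : Fin (k-1) => s(Vtx.u i, Vtx.l i s)))
def zstar : Set (Sym2 (Vtx k)) := Set.range fun i : Fin (2*k) => s(Vtx.p i, Vtx.z)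
def Edges : Set (Sym2 (Vtx k)) := (⋃ i, star k i) ∪ zstar k

def Gk : SimpleGraph (Vtx k) := SimpleGraph.fromEdgeSet (Edges k)
variable {k}
lemma mem_star {i : Fin (2*k)} {e : Sym2 (Vtx k)} :
    e ∈ star k i ↔ e = s(Vtx.w, Vtx.u i) ∨ e = s(Vtx.u i, Vtx.p i) ∨
      ∃ s, e = s(Vtx.u i, Vtx.l i s) := by
  simp [star, Set.mem_insert_iff, Set.mem_range, eq_comm]
lemma mem_zstar {e : Sym2 (Vtx k)} :
    e ∈ zstar k ↔ ∃ i, e = s(Vtx.p i, Vtx.z) := by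
  simp [zstar, Set.mem_range, eq_comm]

lemma edgeSet_Gk : (Gk k).edgeSet = Edges k := by
  rw [Gk, SimpleGraph.edgeSet_fromEdgeSet]
  rw [sdiff_eq_left, Set.disjoint_right]
  intro e hd he
  rcases he with he | he
  · simp only [Set.mem_iUnion] at he
    obtain ⟨i, hi⟩ := he
    rcases mem_star.mp hi with rfl | rfl | ⟨s, rfl⟩ <;> simp_all [Sym2.isDiag_iff_proj_eq]
  · obtain ⟨i, rfl⟩ := mem_zstar.mp he
    simp_all [Sym2.isDiag_iff_proj_eq]

lemma ncard_star (hk : 1 ≤ k) (i : Fin (2*k)) : (star k i).ncard = k + 1 := by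
  have hinj : Function.Injective (fun s : Fin (k-1) => s(Vtx.u i, Vtx.l i s)) := by
    intro a b h
    simp [Sym2.eq_iff] at h
    exact h
  have hr : (Set.range fun s : Fin (k-1) => s(Vtx.u i, Vtx.l i s)).ncard = k - 1 := by
    rw [← Set.image_univ, Set.ncard_image_of_injective _ hinj, Set.ncard_univ]
    simp
  have h1 : s(Vtx.w, Vtx.u i) ∉ insert s(Vtx.u i, Vtx.p i)
      (Set.range fun s : Fin (k-1) => s(Vtx.u i, Vtx.l i s)) := by
    simp [Set.mem_insert_iff, Set.mem_range, Sym2.eq_iff]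
  have h2 : s(Vtx.u i, Vtx.p i) ∉
      (Set.range fun s : Fin (k-1) => s(Vtx.u i, Vtx.l i s)) := by
    simp [Set.mem_range, Sym2.eq_iff]
  rw [star, Set.ncard_insert_of_notMem h1 (Set.toFinite _),
    Set.ncard_insert_of_notMem h2 (Set.toFinite _), hr]
  omega

lemma ncard_zstar : (zstar k).ncard = 2 * k := by
  have hinj : Function.Injective (fun i : Fin (2*k) => s(Vtx.p i, Vtx.z)) := by
    intro a b h
    simp [Sym2.eq_iff] at h
    exact h
  rw [zstar, ← Set.image_univ, Set.ncard_image_of_injective _ hinj, Set.ncard_univ]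
  simp

section inc
variable {e : Sym2 (Vtx k)} (he : e ∈ Edges k)
include he

lemma incW (hv : Vtx.w ∈ e) : ∃ i, e = s(Vtx.w, Vtx.u i) := by
  rw [Edges, Set.mem_union, Set.mem_iUnion] at he
  rcases he with ⟨j, hj⟩ | hz
  · rcases mem_star.mp hj with rfl | rfl | ⟨s, rfl⟩ <;> simp_all [Sym2.mem_iff]
  · obtain ⟨i, rfl⟩ := mem_zstar.mp hz; simp_all [Sym2.mem_iff]

lemma incU {i : Fin (2*k)} (hv : Vtx.u i ∈ e) : e ∈ star k i := by
  rw [Edges, Set.mem_union, Set.mem_iUnion] at he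
  rcases he with ⟨j, hj⟩ | hz
  · rcases mem_star.mp hj with rfl | rfl | ⟨s, rfl⟩ <;>
      simp_all [Sym2.mem_iff, mem_star]
  · obtain ⟨i', rfl⟩ := mem_zstar.mp hz; simp_all [Sym2.mem_iff]

lemma incL {i : Fin (2*k)} {s : Fin (k-1)} (hv : Vtx.l i s ∈ e) :
    e = s(Vtx.u i, Vtx.l i s) := by
  rw [Edges, Set.mem_union, Set.mem_iUnion] at he
  rcases he with ⟨j, hj⟩ | hz
  · rcases mem_star.mp hj with rfl | rfl | ⟨s', rfl⟩ <;> simp_all [Sym2.mem_iff]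
  · obtain ⟨i', rfl⟩ := mem_zstar.mp hz; simp_all [Sym2.mem_iff]

lemma incP {i : Fin (2*k)} (hv : Vtx.p i ∈ e) :
    e = s(Vtx.u i, Vtx.p i) ∨ e = s(Vtx.p i, Vtx.z) := by
  rw [Edges, Set.mem_union, Set.mem_iUnion] at he
  rcases he with ⟨j, hj⟩ | hz
  · rcases mem_star.mp hj with rfl | rfl | ⟨s', rfl⟩ <;> simp_all [Sym2.mem_iff]
  · obtain ⟨i', rfl⟩ := mem_zstar.mp hz; simp_all [Sym2.mem_iff]

lemma incZ (hv : Vtx.z ∈ e) : ∃ i, e = s(Vtx.p i, Vtx.z) := by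
  rw [Edges, Set.mem_union, Set.mem_iUnion] at he
  rcases he with ⟨j, hj⟩ | hz
  · rcases mem_star.mp hj with rfl | rfl | ⟨s', rfl⟩ <;> simp_all [Sym2.mem_iff]
  · obtain ⟨i', rfl⟩ := mem_zstar.mp hz
    exact ⟨i', rfl⟩

end inc

lemma absk {k a b : ℕ} (h : (k:ℤ) ≤ |(a:ℤ) - (b:ℤ)|) : k + b ≤ a ∨ k + a ≤ b := by
  rcases le_abs.mp h with h' | h' <;> omega

lemma partDeg_one_le {V : Type*} [Finite V] {E : Set (Sym2 V)} {e₀ : Sym2 V} {v : V}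
    (h : e₀ ∈ E) (hv : v ∈ e₀) : 1 ≤ partDeg E v := by
  rw [partDeg]
  exact (Set.ncard_pos (Set.toFinite _)).mpr ⟨e₀, h, hv⟩

section claims
variable {E : Set (Sym2 (Vtx k))} (hE : E ⊆ Edges k)
  (hirr : IsLocallyKIrregularPart k E)
include hE

lemma filterW_sub : {e ∈ E | Vtx.w ∈ e} ⊆ Set.range fun i : Fin (2*k) => s(Vtx.w, Vtx.u i) := by
  rintro e ⟨heE, hv⟩
  obtain ⟨i, rfl⟩ := incW (hE heE) hv
  exact ⟨i, rfl⟩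

lemma dW_le : partDeg E Vtx.w ≤ 2 * k := by
  have hinj : Function.Injective (fun i : Fin (2*k) => s(Vtx.w, Vtx.u i)) := by
    intro a b h; simp [Sym2.eq_iff] at h; exact h
  have := Set.ncard_le_ncard (filterW_sub hE) (Set.toFinite _)
  rwa [← Set.image_univ, Set.ncard_image_of_injective _ hinj, Set.ncard_univ,
    Nat.card_eq_fintype_card, Fintype.card_fin] at this

lemma filterU_sub {i : Fin (2*k)} : {e ∈ E | Vtx.u i ∈ e} ⊆ star k i := by
  rintro e ⟨heE, hv⟩
  exact incU (hE heE) hv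

lemma dU_le (hk : 1 ≤ k) {i : Fin (2*k)} : partDeg E (Vtx.u i) ≤ k + 1 := by
  have := Set.ncard_le_ncard (filterU_sub hE (i := i)) (Set.toFinite _)
  rwa [ncard_star hk] at this

lemma dP_le {i : Fin (2*k)} : partDeg E (Vtx.p i) ≤ 2 := by
  have hsub : {e ∈ E | Vtx.p i ∈ e} ⊆ {s(Vtx.u i, Vtx.p i), s(Vtx.p i, Vtx.z)} := by
    rintro e ⟨heE, hv⟩
    rcases incP (hE heE) hv with rfl | rfl
    · exact Set.mem_insert _ _
    · exact Set.mem_insert_of_mem _ rfl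
  have := Set.ncard_le_ncard hsub (Set.toFinite _)
  calc partDeg E (Vtx.p i) ≤ _ := this
    _ ≤ 2 := by
      apply le_trans (Set.ncard_insert_le _ _)
      simp

lemma dL_eq {i : Fin (2*k)} {s : Fin (k-1)} (h : s(Vtx.u i, Vtx.l i s) ∈ E) :
    partDeg E (Vtx.l i s) = 1 := by
  have : {e ∈ E | Vtx.l i s ∈ e} = {s(Vtx.u i, Vtx.l i s)} := by
    ext e
    simp only [Set.mem_setOf_eq, Set.mem_singleton_iff]
    constructor
    · rintro ⟨heE, hv⟩; exact incL (hE heE) hv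
    · rintro rfl; exact ⟨h, by simp [Sym2.mem_iff]⟩
  rw [partDeg, this, Set.ncard_singleton]

lemma starFull (hk : 1 ≤ k) {i : Fin (2*k)} (h : k + 1 ≤ partDeg E (Vtx.u i)) :
    star k i ⊆ E ∧ partDeg E (Vtx.u i) = k + 1 := by
  have heq : {e ∈ E | Vtx.u i ∈ e} = star k i := by
    apply Set.eq_of_subset_of_ncard_le (filterU_sub hE)
    rw [ncard_star hk]; exact h
  constructor
  · rw [← heq]; rintro e ⟨heE, _⟩; exact heE
  · rw [partDeg, heq, ncard_star hk]

omit hE in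
lemma star_sub_filterU {i : Fin (2*k)} (hstar : star k i ⊆ E) :
    star k i ⊆ {e ∈ E | Vtx.u i ∈ e} := by
  intro e he
  refine ⟨hstar he, ?_⟩
  rcases mem_star.mp he with rfl | rfl | ⟨s, rfl⟩ <;> simp [Sym2.mem_iff]

include hirr

lemma leafFull (hk : 1 ≤ k) {i : Fin (2*k)} {s : Fin (k-1)}
    (h : s(Vtx.u i, Vtx.l i s) ∈ E) : star k i ⊆ E := by
  have hdl := dL_eq hE h
  have hdu1 : 1 ≤ partDeg E (Vtx.u i) := partDeg_one_le h (by simp [Sym2.mem_iff])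
  have habs := absk (hirr _ _ h)
  rw [hdl] at habs
  exact (starFull hE hk (by omega)).1

lemma pFull (hk : 2 ≤ k) {i : Fin (2*k)} (h : s(Vtx.u i, Vtx.p i) ∈ E) :
    star k i ⊆ E ∧ s(Vtx.p i, Vtx.z) ∉ E := by
  have hdp1 : 1 ≤ partDeg E (Vtx.p i) := partDeg_one_le h (by simp [Sym2.mem_iff])
  have hdp2 := dP_le hE (i := i)
  have hdu1 : 1 ≤ partDeg E (Vtx.u i) := partDeg_one_le h (by simp [Sym2.mem_iff])
  have habs := absk (hirr _ _ h)
  have hdu : k + 1 ≤ partDeg E (Vtx.u i) := by omega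
  obtain ⟨hstar, hdueq⟩ := starFull hE (by omega) hdu
  have hdp : partDeg E (Vtx.p i) = 1 := by
    rw [hdueq] at habs; omega
  refine ⟨hstar, ?_⟩
  have hsing : ({s(Vtx.u i, Vtx.p i)} : Set (Sym2 (Vtx k))) = {e ∈ E | Vtx.p i ∈ e} := by
    apply Set.eq_of_subset_of_ncard_le
    · intro e he
      rw [Set.mem_singleton_iff] at he
      subst he
      exact ⟨h, by simp [Sym2.mem_iff]⟩
    · rw [Set.ncard_singleton]
      rw [partDeg] at hdp
      omega
    · exact Set.toFinite _
  intro hcon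
  have : s(Vtx.p i, Vtx.z) ∈ ({s(Vtx.u i, Vtx.p i)} : Set (Sym2 (Vtx k))) := by
    rw [hsing]
    exact ⟨hcon, by simp [Sym2.mem_iff]⟩
  simp [Sym2.eq_iff] at this

lemma zEdge (hk : 2 ≤ k) {i : Fin (2*k)} (h : s(Vtx.p i, Vtx.z) ∈ E) :
    k + 1 ≤ partDeg E Vtx.z := by
  have hup : s(Vtx.u i, Vtx.p i) ∉ E := fun hc => (pFull hE hirr hk hc).2 h
  have hdp : partDeg E (Vtx.p i) = 1 := by
    have hsing : {e ∈ E | Vtx.p i ∈ e} = {s(Vtx.p i, Vtx.z)} := by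
      ext e
      simp only [Set.mem_setOf_eq, Set.mem_singleton_iff]
      constructor
      · rintro ⟨heE, hv⟩
        rcases incP (hE heE) hv with rfl | rfl
        · exact absurd heE hup
        · rfl
      · rintro rfl; exact ⟨h, by simp [Sym2.mem_iff]⟩
    rw [partDeg, hsing, Set.ncard_singleton]
  have hdz1 : 1 ≤ partDeg E Vtx.z := partDeg_one_le h (by simp [Sym2.mem_iff])
  have habs := absk (hirr _ _ h)
  rw [hdp] at habs
  omega

lemma wOne (hk : 2 ≤ k) {i : Fin (2*k)} (hstar : star k i ⊆ E) :
    ∀ j, s(Vtx.w, Vtx.u j) ∈ E → j = i := by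
  have hfil : {e ∈ E | Vtx.u i ∈ e} = star k i :=
    Set.Subset.antisymm (filterU_sub hE) (star_sub_filterU hstar)
  have hdu : partDeg E (Vtx.u i) = k + 1 := by
    rw [partDeg, hfil, ncard_star (by omega)]
  have hwu : s(Vtx.w, Vtx.u i) ∈ E := hstar (by rw [mem_star]; tauto)
  have habs := absk (hirr _ _ hwu)
  rw [hdu] at habs
  have hw2k := dW_le hE
  have hw1 : 1 ≤ partDeg E Vtx.w := partDeg_one_le hwu (by simp [Sym2.mem_iff])
  have hdw : partDeg E Vtx.w = 1 := by omega
  have hsing : ({s(Vtx.w, Vtx.u i)} : Set (Sym2 (Vtx k))) = {e ∈ E | Vtx.w ∈ e} := by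
    apply Set.eq_of_subset_of_ncard_le
    · intro e he
      rw [Set.mem_singleton_iff] at he
      subst he
      exact ⟨hwu, by simp [Sym2.mem_iff]⟩
    · rw [Set.ncard_singleton]
      rw [partDeg] at hdw
      omega
    · exact Set.toFinite _
  intro j hj
  have : s(Vtx.w, Vtx.u j) ∈ ({s(Vtx.w, Vtx.u i)} : Set (Sym2 (Vtx k))) := by
    rw [hsing]
    exact ⟨hj, by simp [Sym2.mem_iff]⟩
  simp [Sym2.eq_iff] at this
  exact this

end claims

lemma lb2 (hk : 2 ≤ k) (t : ℕ) (Q : Fin t → Set (Sym2 (Vtx k)))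
    (hU : (⋃ i, Q i) = Edges k)
    (hD : ∀ i j, i ≠ j → Disjoint (Q i) (Q j))
    (hirr : ∀ i, IsLocallyKIrregularPart k (Q i)) :
    2 * k + 1 ≤ t := by
  have hQsub : ∀ j, Q j ⊆ Edges k := fun j => hU ▸ Set.subset_iUnion Q j
  have hcov : ∀ e ∈ Edges k, ∃ j, e ∈ Q j := by
    intro e he
    rw [← hU] at he
    exact Set.mem_iUnion.mp he
  have s0 : Fin (k-1) := ⟨0, by omega⟩
  have hleafE : ∀ i : Fin (2*k), s(Vtx.u i, Vtx.l i s0) ∈ Edges k := fun i =>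
    Or.inl (Set.mem_iUnion.mpr ⟨i, mem_star.mpr (Or.inr (Or.inr ⟨s0, rfl⟩))⟩)
  choose R hR using fun i => hcov _ (hleafE i)
  have hstarR : ∀ i, star k i ⊆ Q (R i) := fun i =>
    leafFull (hQsub _) (hirr _) (by omega) (hR i)
  have hzE : ∀ i : Fin (2*k), s(Vtx.p i, Vtx.z) ∈ Edges k := fun i =>
    Or.inr (mem_zstar.mpr ⟨i, rfl⟩)
  choose Zf hZf using fun i => hcov _ (hzE i)
  have i0 : Fin (2*k) := ⟨0, by omega⟩
  have hZall : ∀ i, Zf i = Zf i0 := by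
    intro i
    by_contra hne
    have hdisj := hD _ _ hne
    have hS1 : {e ∈ Q (Zf i) | Vtx.z ∈ e} ⊆ zstar k := by
      rintro e ⟨heQ, hv⟩
      obtain ⟨j, rfl⟩ := incZ (hQsub _ heQ) hv
      exact mem_zstar.mpr ⟨j, rfl⟩
    have hS2 : {e ∈ Q (Zf i0) | Vtx.z ∈ e} ⊆ zstar k := by
      rintro e ⟨heQ, hv⟩
      obtain ⟨j, rfl⟩ := incZ (hQsub _ heQ) hv
      exact mem_zstar.mpr ⟨j, rfl⟩
    have hd1 : k + 1 ≤ partDeg (Q (Zf i)) Vtx.z :=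
      zEdge (hQsub _) (hirr _) hk (hZf i)
    have hd2 : k + 1 ≤ partDeg (Q (Zf i0)) Vtx.z :=
      zEdge (hQsub _) (hirr _) hk (hZf i0)
    have hdisj' : Disjoint {e ∈ Q (Zf i) | Vtx.z ∈ e} {e ∈ Q (Zf i0) | Vtx.z ∈ e} :=
      hdisj.mono (Set.sep_subset _ _) (Set.sep_subset _ _)
    have hun : ({e ∈ Q (Zf i) | Vtx.z ∈ e} ∪ {e ∈ Q (Zf i0) | Vtx.z ∈ e}).ncard =
        partDeg (Q (Zf i)) Vtx.z + partDeg (Q (Zf i0)) Vtx.z := by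
      rw [partDeg, partDeg]
      exact Set.ncard_union_eq hdisj' (Set.toFinite _) (Set.toFinite _)
    have hle : ({e ∈ Q (Zf i) | Vtx.z ∈ e} ∪ {e ∈ Q (Zf i0) | Vtx.z ∈ e}).ncard ≤ 2 * k := by
      have := Set.ncard_le_ncard (Set.union_subset hS1 hS2) (Set.toFinite _)
      rwa [ncard_zstar] at this
    omega
  have hZmem : ∀ i, s(Vtx.p i, Vtx.z) ∈ Q (Zf i0) := fun i => hZall i ▸ hZf i
  have hRneZ : ∀ i, R i ≠ Zf i0 := by
    intro i h
    have hup : s(Vtx.u i, Vtx.p i) ∈ Q (R i) :=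
      hstarR i (mem_star.mpr (Or.inr (Or.inl rfl)))
    have := (pFull (hQsub _) (hirr _) hk hup).2
    rw [h] at this
    exact this (hZmem i)
  have hRinj : Function.Injective R := by
    intro a b hab
    have hwa : s(Vtx.w, Vtx.u a) ∈ Q (R a) := hstarR a (mem_star.mpr (Or.inl rfl))
    rw [hab] at hwa
    exact wOne (hQsub _) (hirr _) hk (hstarR b) a hwa
  have hginj : Function.Injective (Sum.elim R (fun _ : Unit => Zf i0)) := by
    rintro (a | a) (b | b) hab <;> simp only [Sum.elim_inl, Sum.elim_inr] at hab
    · rw [hRinj hab]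
    · exact absurd hab (hRneZ a)
    · exact absurd hab.symm (hRneZ b)
    · rfl
  have hcard := Fintype.card_le_of_injective _ hginj
  simpa using hcard

lemma absk' {k a b : ℕ} (h : k + b ≤ a ∨ k + a ≤ b) : (k:ℤ) ≤ |(a:ℤ) - (b:ℤ)| := by
  rcases h with h | h
  · rw [abs_of_nonneg (by omega)]; omega
  · rw [abs_of_nonpos (by omega)]; omega

lemma star_disjoint {i j : Fin (2*k)} (h : i ≠ j) : Disjoint (star k i) (star k j) := by
  rw [Set.disjoint_left]
  intro e hei hej
  rcases mem_star.mp hei with rfl | rfl | ⟨s, rfl⟩ <;>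
    rcases mem_star.mp hej with h' | h' | ⟨s', h'⟩ <;>
    simp_all [Sym2.eq_iff]

lemma star_zstar_disjoint {i : Fin (2*k)} : Disjoint (star k i) (zstar k) := by
  rw [Set.disjoint_left]
  intro e hei hej
  rcases mem_star.mp hei with rfl | rfl | ⟨s, rfl⟩ <;>
    rcases mem_zstar.mp hej with ⟨j, h'⟩ <;>
    simp_all [Sym2.eq_iff]

lemma star_mem_u {i : Fin (2*k)} {e : Sym2 (Vtx k)} (he : e ∈ star k i) : Vtx.u i ∈ e := by
  rcases mem_star.mp he with rfl | rfl | ⟨s, rfl⟩ <;> simp [Sym2.mem_iff]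

lemma pd_star_u (hk : 1 ≤ k) (i : Fin (2*k)) : partDeg (star k i) (Vtx.u i) = k + 1 := by
  have : {e ∈ star k i | Vtx.u i ∈ e} = star k i :=
    Set.Subset.antisymm (Set.sep_subset _ _) (fun e he => ⟨he, star_mem_u he⟩)
  rw [partDeg, this, ncard_star hk]

lemma pd_star_w (i : Fin (2*k)) : partDeg (star k i) Vtx.w = 1 := by
  have : {e ∈ star k i | Vtx.w ∈ e} = {s(Vtx.w, Vtx.u i)} := by
    ext e
    simp only [Set.mem_setOf_eq, Set.mem_singleton_iff]
    constructor
    · rintro ⟨he, hv⟩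
      rcases mem_star.mp he with rfl | rfl | ⟨s, rfl⟩ <;> simp_all [Sym2.mem_iff]
    · rintro rfl
      exact ⟨mem_star.mpr (Or.inl rfl), by simp [Sym2.mem_iff]⟩
  rw [partDeg, this, Set.ncard_singleton]

lemma pd_star_p (i : Fin (2*k)) : partDeg (star k i) (Vtx.p i) = 1 := by
  have : {e ∈ star k i | Vtx.p i ∈ e} = {s(Vtx.u i, Vtx.p i)} := by
    ext e
    simp only [Set.mem_setOf_eq, Set.mem_singleton_iff]
    constructor
    · rintro ⟨he, hv⟩
      rcases mem_star.mp he with rfl | rfl | ⟨s, rfl⟩ <;> simp_all [Sym2.mem_iff]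
    · rintro rfl
      exact ⟨mem_star.mpr (Or.inr (Or.inl rfl)), by simp [Sym2.mem_iff]⟩
  rw [partDeg, this, Set.ncard_singleton]

lemma pd_star_l (i : Fin (2*k)) (s : Fin (k-1)) :
    partDeg (star k i) (Vtx.l i s) = 1 := by
  have : {e ∈ star k i | Vtx.l i s ∈ e} = {s(Vtx.u i, Vtx.l i s)} := by
    ext e
    simp only [Set.mem_setOf_eq, Set.mem_singleton_iff]
    constructor
    · rintro ⟨he, hv⟩
      rcases mem_star.mp he with rfl | rfl | ⟨s', rfl⟩ <;> simp_all [Sym2.mem_iff]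
    · rintro rfl
      exact ⟨mem_star.mpr (Or.inr (Or.inr ⟨s, rfl⟩)), by simp [Sym2.mem_iff]⟩
  rw [partDeg, this, Set.ncard_singleton]

lemma star_irr (hk : 1 ≤ k) (i : Fin (2*k)) :
    IsLocallyKIrregularPart k (star k i) := by
  intro a b hab
  have hcases := mem_star.mp hab
  rcases hcases with h | h | ⟨s, h⟩ <;> rw [Sym2.eq_iff] at h <;>
    rcases h with ⟨rfl, rfl⟩ | ⟨rfl, rfl⟩ <;>
    simp only [pd_star_u hk, pd_star_w, pd_star_p, pd_star_l] <;>
    exact absk' (by omega)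

lemma pd_zstar_z : partDeg (zstar k) Vtx.z = 2 * k := by
  have : {e ∈ zstar k | Vtx.z ∈ e} = zstar k := by
    refine Set.Subset.antisymm (Set.sep_subset _ _) (fun e he => ⟨he, ?_⟩)
    obtain ⟨i, rfl⟩ := mem_zstar.mp he
    simp [Sym2.mem_iff]
  rw [partDeg, this, ncard_zstar]

lemma pd_zstar_p (i : Fin (2*k)) : partDeg (zstar k) (Vtx.p i) = 1 := by
  have : {e ∈ zstar k | Vtx.p i ∈ e} = {s(Vtx.p i, Vtx.z)} := by
    ext e
    simp only [Set.mem_setOf_eq, Set.mem_singleton_iff]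
    constructor
    · rintro ⟨he, hv⟩
      obtain ⟨j, rfl⟩ := mem_zstar.mp he
      simp_all [Sym2.mem_iff]
    · rintro rfl
      exact ⟨mem_zstar.mpr ⟨i, rfl⟩, by simp [Sym2.mem_iff]⟩
  rw [partDeg, this, Set.ncard_singleton]

lemma zstar_irr (hk : 1 ≤ k) : IsLocallyKIrregularPart k (zstar k) := by
  intro a b hab
  obtain ⟨i, h⟩ := mem_zstar.mp hab
  rw [Sym2.eq_iff] at h
  rcases h with ⟨rfl, rfl⟩ | ⟨rfl, rfl⟩ <;>
    simp only [pd_zstar_z, pd_zstar_p] <;>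
    exact absk' (by omega)

lemma exist (hk : 1 ≤ k) : ∃ Q : Fin (2*k+1) → Set (Sym2 (Vtx k)),
    (⋃ i, Q i) = Edges k ∧ (∀ i j, i ≠ j → Disjoint (Q i) (Q j)) ∧
    ∀ i, IsLocallyKIrregularPart k (Q i) := by
  refine ⟨fun j => if h : (j : ℕ) < 2*k then star k ⟨j, h⟩ else zstar k, ?_, ?_, ?_⟩
  · apply Set.Subset.antisymm
    · apply Set.iUnion_subset
      intro j
      by_cases h : (j : ℕ) < 2*k
      · rw [dif_pos h]
        exact fun e he => Or.inl (Set.mem_iUnion.mpr ⟨_, he⟩)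
      · rw [dif_neg h]
        exact fun e he => Or.inr he
    · rintro e (he | he)
      · obtain ⟨i, hi⟩ := Set.mem_iUnion.mp he
        refine Set.mem_iUnion.mpr ⟨⟨i.1, by omega⟩, ?_⟩
        rw [dif_pos i.2]
        simpa using hi
      · refine Set.mem_iUnion.mpr ⟨⟨2*k, by omega⟩, ?_⟩
        rw [dif_neg (by simp)]
        exact he
  · intro i j hij
    by_cases hi : (i : ℕ) < 2*k <;> by_cases hj : (j : ℕ) < 2*k
    · simp only [dif_pos hi, dif_pos hj]
      apply star_disjoint
      intro hc
      apply hij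
      apply Fin.ext
      have := congrArg Fin.val hc
      simpa using this
    · simp only [dif_pos hi, dif_neg hj]
      exact star_zstar_disjoint
    · simp only [dif_neg hi, dif_pos hj]
      exact star_zstar_disjoint.symm
    · exfalso
      apply hij
      apply Fin.ext
      omega
  · intro j
    by_cases h : (j : ℕ) < 2*k
    · simp only [dif_pos h]; exact star_irr hk _
    · simp only [dif_neg h]; exact zstar_irr hk

section transport
variable {V W : Type*} (φ : V ≃ W)

lemma sym2map_mem (x : V) (g : Sym2 V) : φ x ∈ Sym2.map φ g ↔ x ∈ g := by
  rw [Sym2.mem_map]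
  constructor
  · rintro ⟨a, ha, heq⟩
    rwa [← φ.injective heq]
  · intro h
    exact ⟨x, h, rfl⟩

lemma sym2map_injective : Function.Injective (Sym2.map (φ : V → W)) :=
  Sym2.map.injective φ.injective

lemma partDeg_image (E : Set (Sym2 V)) (v : V) :
    partDeg (Sym2.map (φ : V → W) '' E) (φ v) = partDeg E v := by
  rw [partDeg, partDeg]
  have hset : {e ∈ Sym2.map (φ : V → W) '' E | φ v ∈ e} =
      Sym2.map (φ : V → W) '' {g ∈ E | v ∈ g} := by
    ext f
    constructor
    · rintro ⟨⟨g, hg, rfl⟩, hv⟩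
      exact ⟨g, ⟨hg, (sym2map_mem φ v g).mp hv⟩, rfl⟩
    · rintro ⟨g, ⟨hg, hv⟩, rfl⟩
      exact ⟨⟨g, hg, rfl⟩, (sym2map_mem φ v g).mpr hv⟩
  rw [hset, Set.ncard_image_of_injective _ (sym2map_injective φ)]

lemma irr_image {k : ℕ} {E : Set (Sym2 V)} (h : IsLocallyKIrregularPart k E) :
    IsLocallyKIrregularPart k (Sym2.map (φ : V → W) '' E) := by
  rintro a b ⟨g, hg, hmap⟩
  induction g using Sym2.ind with
  | _ x y =>
    rw [Sym2.map_pair_eq, Sym2.eq_iff] at hmap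
    rcases hmap with ⟨rfl, rfl⟩ | ⟨rfl, rfl⟩
    · rw [partDeg_image, partDeg_image]
      exact h x y hg
    · rw [partDeg_image, partDeg_image, abs_sub_comm]
      exact h x y hg

lemma sym2map_leftinv (f : Sym2 W) : Sym2.map (φ : V → W) (Sym2.map (φ.symm : W → V) f) = f := by
  rw [Sym2.map_map]
  have : ((φ : V → W) ∘ (φ.symm : W → V)) = id := by
    ext x
    simp
  rw [this, Sym2.map_id, id]

lemma sym2map_rightinv (f : Sym2 V) : Sym2.map (φ.symm : W → V) (Sym2.map (φ : V → W) f) = f := by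
  rw [Sym2.map_map]
  have : ((φ.symm : W → V) ∘ (φ : V → W)) = id := by
    ext x
    simp
  rw [this, Sym2.map_id, id]

lemma disjoint_image {A B : Set (Sym2 V)} (h : Disjoint A B) :
    Disjoint (Sym2.map (φ : V → W) '' A) (Sym2.map (φ : V → W) '' B) := by
  rw [Set.disjoint_left]
  rintro f ⟨g, hg, rfl⟩ ⟨g', hg', heq⟩
  rw [sym2map_injective φ heq] at hg'
  exact Set.disjoint_left.mp h hg hg'

end transport

/-! ### The `k = 1` case: the graph is `C₆`. -/

def i0 : Fin (2*1) := ⟨0, by norm_num⟩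
def i1 : Fin (2*1) := ⟨1, by norm_num⟩

/-- The six edges of `C₆`, in cyclic order. -/
def edg : Fin 6 → Sym2 (Vtx 1) :=
  ![s(Vtx.w, Vtx.u i0), s(Vtx.u i0, Vtx.p i0), s(Vtx.p i0, Vtx.z),
    s(Vtx.z, Vtx.p i1), s(Vtx.p i1, Vtx.u i1), s(Vtx.u i1, Vtx.w)]

/-- The six vertices of `C₆`, in cyclic order. -/
def vmap : Fin 6 → Vtx 1 :=
  ![Vtx.w, Vtx.u i0, Vtx.p i0, Vtx.z, Vtx.p i1, Vtx.u i1]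

/-- Endpoints of edge `j` are vertices `j` and `j+1`. -/
def ep : Fin 6 → Fin 6 × Fin 6 :=
  ![(0,1), (1,2), (2,3), (3,4), (4,5), (5,0)]

def adeg (A : Finset (Fin 6)) (v : Fin 6) : ℕ :=
  (A.filter (fun j => (ep j).1 = v ∨ (ep j).2 = v)).card

def aok (A : Finset (Fin 6)) : Prop :=
  ∀ j ∈ A, adeg A (ep j).1 ≠ adeg A (ep j).2

instance : DecidablePred aok := fun A => by unfold aok; infer_instance

lemma akey : ∀ A : Finset (Fin 6), ¬(aok A ∧ aok Aᶜ) := by decide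

lemma edg_inj : Function.Injective edg := by decide

lemma edg_mem (j : Fin 6) : edg j ∈ Edges 1 := by
  fin_cases j
  · exact Or.inl (Set.mem_iUnion.mpr ⟨i0, mem_star.mpr (Or.inl rfl)⟩)
  · exact Or.inl (Set.mem_iUnion.mpr ⟨i0, mem_star.mpr (Or.inr (Or.inl rfl))⟩)
  · exact Or.inr (mem_zstar.mpr ⟨i0, rfl⟩)
  · exact Or.inr (mem_zstar.mpr ⟨i1, by decide⟩)
  · exact Or.inl (Set.mem_iUnion.mpr ⟨i1, mem_star.mpr (Or.inr (Or.inl (by decide)))⟩)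
  · exact Or.inl (Set.mem_iUnion.mpr ⟨i1, mem_star.mpr (Or.inl (by decide))⟩)

lemma edg_surj {e : Sym2 (Vtx 1)} (he : e ∈ Edges 1) : ∃ j, edg j = e := by
  rcases he with he | he
  · obtain ⟨i, hi⟩ := Set.mem_iUnion.mp he
    obtain ⟨iv, hlt⟩ := i
    interval_cases iv
    · rcases mem_star.mp hi with rfl | rfl | ⟨s, rfl⟩
      · exact ⟨0, rfl⟩
      · exact ⟨1, rfl⟩
      · exact s.elim0
    · have h : (⟨1, hlt⟩ : Fin (2*1)) = i1 := rfl
      rw [h] at hi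
      rcases mem_star.mp hi with rfl | rfl | ⟨s, rfl⟩
      · exact ⟨5, by decide⟩
      · exact ⟨4, by decide⟩
      · exact s.elim0
  · obtain ⟨i, rfl⟩ := mem_zstar.mp he
    obtain ⟨iv, hlt⟩ := i
    interval_cases iv
    · exact ⟨2, rfl⟩
    · have h : (⟨1, hlt⟩ : Fin (2*1)) = i1 := rfl
      rw [h]
      exact ⟨3, by decide⟩

lemma inc_iff : ∀ v j : Fin 6, vmap v ∈ edg j ↔ ((ep j).1 = v ∨ (ep j).2 = v) := by decide

lemma edg_eq_pair : ∀ j : Fin 6, edg j = s(vmap (ep j).1, vmap (ep j).2) := by decide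


lemma toA_deg {E : Set (Sym2 (Vtx 1))} (hE : E ⊆ Edges 1)
    (A : Finset (Fin 6)) (hA : ∀ j, j ∈ A ↔ edg j ∈ E) (v : Fin 6) :
    partDeg E (vmap v) = adeg A v := by
  have himg : {e ∈ E | vmap v ∈ e} =
      edg '' {j : Fin 6 | j ∈ A ∧ ((ep j).1 = v ∨ (ep j).2 = v)} := by
    ext e
    constructor
    · rintro ⟨heE, hv⟩
      obtain ⟨j, rfl⟩ := edg_surj (hE heE)
      exact ⟨j, ⟨(hA j).mpr heE, (inc_iff v j).mp hv⟩, rfl⟩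
    · rintro ⟨j, ⟨hj1, hj2⟩, rfl⟩
      exact ⟨(hA j).mp hj1, (inc_iff v j).mpr hj2⟩
  rw [partDeg, himg, Set.ncard_image_of_injective _ edg_inj]
  have hset : {j : Fin 6 | j ∈ A ∧ ((ep j).1 = v ∨ (ep j).2 = v)} =
      ↑(A.filter (fun j => (ep j).1 = v ∨ (ep j).2 = v)) := by
    ext j
    simp [Finset.mem_filter]
  rw [hset, Set.ncard_coe_finset, adeg]

lemma toAok {E : Set (Sym2 (Vtx 1))} (hE : E ⊆ Edges 1)
    (hirr : IsLocallyKIrregularPart 1 E)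
    (A : Finset (Fin 6)) (hA : ∀ j, j ∈ A ↔ edg j ∈ E) :
    aok A := by
  intro j hj
  have hirr' := hirr (vmap (ep j).1) (vmap (ep j).2)
    (by rw [← edg_eq_pair j]; exact (hA j).mp hj)
  have hpd1 := toA_deg hE A hA (ep j).1
  have hpd2 := toA_deg hE A hA (ep j).2
  intro heq
  rw [hpd1, hpd2, heq] at hirr'
  simp at hirr'

lemma lb1 (t : ℕ) (Q : Fin t → Set (Sym2 (Vtx 1)))
    (hU : (⋃ i, Q i) = Edges 1)
    (hD : ∀ i j, i ≠ j → Disjoint (Q i) (Q j))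
    (hirr : ∀ i, IsLocallyKIrregularPart 1 (Q i)) :
    3 ≤ t := by
  classical
  by_contra hlt
  push_neg at hlt
  have hQsub : ∀ j, Q j ⊆ Edges 1 := fun j => hU ▸ Set.subset_iUnion Q j
  interval_cases t
  · have h0 := edg_mem 0
    rw [← hU] at h0
    obtain ⟨j, _⟩ := Set.mem_iUnion.mp h0
    exact j.elim0
  · have hQ0 : Q 0 = Edges 1 := by
      rw [← hU]
      apply Set.Subset.antisymm (Set.subset_iUnion Q 0)
      apply Set.iUnion_subset
      intro i
      fin_cases i
      exact subset_rfl
    have hA := toAok (hQsub 0) (hirr 0) (Finset.univ.filter (fun j => edg j ∈ Q 0))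
      (fun j => by simp)
    have hfull : (Finset.univ.filter (fun j => edg j ∈ Q 0)) = Finset.univ := by
      apply Finset.eq_univ_of_forall
      intro j
      rw [Finset.mem_filter]
      exact ⟨Finset.mem_univ _, hQ0 ▸ edg_mem j⟩
    refine akey (Finset.univ.filter (fun j => edg j ∈ Q 0)) ⟨hA, ?_⟩
    rw [hfull, Finset.compl_univ]
    intro j hj
    simp at hj
  · have hA := toAok (hQsub 0) (hirr 0) (Finset.univ.filter (fun j => edg j ∈ Q 0))
      (fun j => by simp)
    have hB := toAok (hQsub 1) (hirr 1) (Finset.univ.filter (fun j => edg j ∈ Q 1))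
      (fun j => by simp)
    have hBA : Finset.univ.filter (fun j => edg j ∈ Q 1) =
        (Finset.univ.filter (fun j => edg j ∈ Q 0))ᶜ := by
      ext j
      simp only [Finset.mem_filter, Finset.mem_compl, Finset.mem_univ, true_and]
      constructor
      · intro h1 h0
        exact Set.disjoint_left.mp (hD 0 1 (by simp)) h0 h1
      · intro h0
        have hj := edg_mem j
        rw [← hU] at hj
        obtain ⟨i, hi⟩ := Set.mem_iUnion.mp hj
        fin_cases i
        · exact absurd hi h0
        · exact hi
    rw [hBA] at hB
    exact akey _ ⟨hA, hB⟩

end S13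

/-- there is a finite graph, decomposable into locally k-irregular parts, every
such decomposition of which has at least 2k+1 parts; hence h(k) ≥ 2k+1. -/
theorem stmt_13 (k : ℕ) (hk : 1 ≤ k) :
    ∃ (n : ℕ) (G : SimpleGraph (Fin n)),
      (∃ (t : ℕ) (P : Fin t → Set (Sym2 (Fin n))),
        (⋃ i, P i) = G.edgeSet ∧
        (∀ i j, i ≠ j → Disjoint (P i) (P j)) ∧
        ∀ i, IsLocallyKIrregularPart k (P i)) ∧
      ∀ (t : ℕ) (P : Fin t → Set (Sym2 (Fin n))),
        (⋃ i, P i) = G.edgeSet →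
        (∀ i j, i ≠ j → Disjoint (P i) (P j)) →
        (∀ i, IsLocallyKIrregularPart k (P i)) →
        2 * k + 1 ≤ t := by
  classical
  obtain ⟨Qex, hQexU, hQexD, hQexirr⟩ := S13.exist hk
  set n := Fintype.card (S13.Vtx k) with hn
  set e : S13.Vtx k ≃ Fin n := Fintype.equivFin (S13.Vtx k) with he
  set G : SimpleGraph (Fin n) := SimpleGraph.comap (e.symm : Fin n → S13.Vtx k) (S13.Gk k)
    with hG
  have hGedge : G.edgeSet = Sym2.map (e.symm : Fin n → S13.Vtx k) ⁻¹' (S13.Edges k) := by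
    ext f
    induction f using Sym2.ind with
    | _ x y =>
      rw [SimpleGraph.mem_edgeSet, hG, SimpleGraph.comap_adj, Set.mem_preimage,
        Sym2.map_pair_eq, ← SimpleGraph.mem_edgeSet, S13.edgeSet_Gk]
  have himg : Sym2.map (e : S13.Vtx k → Fin n) '' (S13.Edges k) = G.edgeSet := by
    rw [hGedge]
    ext f
    constructor
    · rintro ⟨g, hg, rfl⟩
      rwa [Set.mem_preimage, S13.sym2map_rightinv]
    · intro hf
      rw [Set.mem_preimage] at hf
      exact ⟨_, hf, S13.sym2map_leftinv e f⟩
  refine ⟨n, G, ⟨2 * k + 1, fun j => Sym2.map (e : S13.Vtx k → Fin n) '' (Qex j), ?_, ?_, ?_⟩, ?_⟩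
  · rw [← Set.image_iUnion, hQexU, himg]
  · intro i j hij
    exact S13.disjoint_image e (hQexD i j hij)
  · intro i
    exact S13.irr_image e (hQexirr i)
  · intro t P hU hD hirr
    have hQU : (⋃ i, Sym2.map (e.symm : Fin n → S13.Vtx k) '' (P i)) = S13.Edges k := by
      rw [← Set.image_iUnion, hU, hGedge, Set.image_preimage_eq]
      intro g
      exact ⟨Sym2.map (e : S13.Vtx k → Fin n) g, S13.sym2map_rightinv e g⟩
    have hQD : ∀ i j, i ≠ j →
        Disjoint (Sym2.map (e.symm : Fin n → S13.Vtx k) '' (P i))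
          (Sym2.map (e.symm : Fin n → S13.Vtx k) '' (P j)) := by
      intro i j hij
      exact S13.disjoint_image e.symm (hD i j hij)
    have hQirr : ∀ i, IsLocallyKIrregularPart k
        (Sym2.map (e.symm : Fin n → S13.Vtx k) '' (P i)) := by
      intro i
      exact S13.irr_image e.symm (hirr i)
    rcases eq_or_lt_of_le hk with h1 | h2
    · subst h1
      exact S13.lb1 t _ hQU hQD hQirr
    · exact S13.lb2 h2 t _ hQU hQD hQirr
end

section
/- For every integer k ≥ 4 there exists a finite graph G such that E(G) admits a partition into locally k-irregular parts, and every partition of E(G) into locally k-irregular parts has at least 4k parts; that is, h(k) ≥ 4k for k > 3. -/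
set_option linter.unusedSectionVars false

open SimpleGraph

variable {V : Type*}

/-! ### Auxiliary material -/

section Basic
variable [Finite V]

lemma partDeg_mono {E F : Set (Sym2 V)} (h : E ⊆ F) (v : V) :
    partDeg E v ≤ partDeg F v :=
  Set.ncard_le_ncard (fun e he => ⟨h he.1, he.2⟩) (Set.toFinite _)

lemma one_le_partDeg {E : Set (Sym2 V)} {e : Sym2 V} {v : V} (he : e ∈ E) (hv : v ∈ e) :
    1 ≤ partDeg E v := by
  have hsub : ({e} : Set (Sym2 V)) ⊆ {e ∈ E | v ∈ e} := by
    rintro x rfl; exact ⟨he, hv⟩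
  calc 1 = ({e} : Set (Sym2 V)).ncard := (Set.ncard_singleton e).symm
    _ ≤ _ := Set.ncard_le_ncard hsub (Set.toFinite _)

lemma two_le_partDeg {E : Set (Sym2 V)} {e f : Sym2 V} {v : V} (he : e ∈ E) (hf : f ∈ E)
    (hef : e ≠ f) (hv : v ∈ e) (hv' : v ∈ f) : 2 ≤ partDeg E v := by
  have hsub : ({e, f} : Set (Sym2 V)) ⊆ {e ∈ E | v ∈ e} := by
    rintro x (rfl | rfl) <;> exact ⟨by assumption, by assumption⟩
  calc 2 = ({e, f} : Set (Sym2 V)).ncard := (Set.ncard_pair hef).symm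
    _ ≤ _ := Set.ncard_le_ncard hsub (Set.toFinite _)

lemma partDeg_le_incidence {G : SimpleGraph V} {E : Set (Sym2 V)} (h : E ⊆ G.edgeSet) (v : V) :
    partDeg E v ≤ (G.incidenceSet v).ncard :=
  Set.ncard_le_ncard (fun e he => ⟨h he.1, he.2⟩) (Set.toFinite _)

lemma incidence_subset_of_partDeg {G : SimpleGraph V} {E : Set (Sym2 V)} (h : E ⊆ G.edgeSet)
    (v : V) (hge : (G.incidenceSet v).ncard ≤ partDeg E v) : G.incidenceSet v ⊆ E := by
  have heq : {e ∈ E | v ∈ e} = G.incidenceSet v :=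
    Set.eq_of_subset_of_ncard_le (fun e he => ⟨h he.1, he.2⟩) hge (Set.toFinite _)
  intro e he
  rw [← heq] at he
  exact he.1

lemma ncard_incidenceSet (G : SimpleGraph V) (v : V) :
    (G.incidenceSet v).ncard = (G.neighborSet v).ncard := by
  have himg : G.incidenceSet v = (fun w => s(v, w)) '' G.neighborSet v := by
    ext e
    constructor
    · rintro ⟨he, hv⟩
      induction e with
      | _ x y =>
        rcases Sym2.mem_iff.1 hv with rfl | rfl
        · exact ⟨y, he, rfl⟩
        · exact ⟨x, he.symm, Sym2.eq_swap⟩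
    · rintro ⟨w, hw, rfl⟩
      exact ⟨hw, Sym2.mem_mk_left _ _⟩
  rw [himg, Set.ncard_image_of_injective _ (fun a b h => by simpa using Sym2.congr_right.mp h)]

lemma partDeg_incidence_self (G : SimpleGraph V) (v : V) :
    partDeg (G.incidenceSet v) v = (G.incidenceSet v).ncard := by
  unfold partDeg
  congr 1
  ext e
  exact ⟨fun h => h.1, fun h => ⟨h, h.2⟩⟩

lemma partDeg_incidence_other (G : SimpleGraph V) {v w : V} (h : G.Adj v w) :
    partDeg (G.incidenceSet v) w = 1 := by
  unfold partDeg
  have : {e ∈ G.incidenceSet v | w ∈ e} = G.incidenceSet v ∩ G.incidenceSet w := by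
    ext e
    exact ⟨fun ⟨h1, h2⟩ => ⟨h1, h1.1, h2⟩, fun ⟨h1, h2⟩ => ⟨h1, h2.2⟩⟩
  rw [this, G.incidenceSet_inter_incidenceSet_of_adj h, Set.ncard_singleton]

end Basic

lemma sym2_eq_of_mem {α : Type*} {e : Sym2 α} {a b : α} (ha : a ∈ e) (hb : b ∈ e)
    (hab : a ≠ b) : e = s(a, b) := by
  induction e with
  | _ x y =>
    rw [Sym2.mem_iff] at ha hb
    rcases ha with rfl | rfl <;> rcases hb with rfl | rfl <;> first
      | exact absurd rfl hab | rfl | exact Sym2.eq_swap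

lemma edgeSet_map_eq {V' : Type*} (f : V ↪ V') (G : SimpleGraph V) :
    (G.map f).edgeSet = Sym2.map f '' G.edgeSet := by
  ext e
  induction e with
  | _ u v =>
    simp only [SimpleGraph.mem_edgeSet, SimpleGraph.map_adj, Set.mem_image]
    constructor
    · rintro ⟨a, b, hab, rfl, rfl⟩
      exact ⟨s(a, b), hab, Sym2.map_pair_eq f a b⟩
    · rintro ⟨e0, he0, heq⟩
      induction e0 with
      | _ a b =>
        rw [Sym2.map_pair_eq, Sym2.eq_iff] at heq
        rcases heq with ⟨rfl, rfl⟩ | ⟨rfl, rfl⟩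
        · exact ⟨a, b, he0, rfl, rfl⟩
        · exact ⟨b, a, ((SimpleGraph.mem_edgeSet G).1 he0).symm, rfl, rfl⟩

lemma sym2_map_symm_image {α β : Type*} (f : α ≃ β) (S : Set (Sym2 β)) :
    Sym2.map f '' (Sym2.map f.symm '' S) = S := by
  rw [← Set.image_comp]
  have hcomp : (Sym2.map f ∘ Sym2.map f.symm) = id := by
    funext e
    induction e with | _ x y => simp
  rw [hcomp, Set.image_id]

lemma partDeg_map {V' : Type*} (f : V ≃ V') (E : Set (Sym2 V)) (v : V) :
    partDeg (Sym2.map f '' E) (f v) = partDeg E v := by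
  unfold partDeg
  have himg : {e ∈ Sym2.map f '' E | f v ∈ e} = Sym2.map f '' {e ∈ E | v ∈ e} := by
    ext e
    constructor
    · rintro ⟨⟨e0, he0, rfl⟩, hv⟩
      refine ⟨e0, ⟨he0, ?_⟩, rfl⟩
      rcases Sym2.mem_map.1 hv with ⟨a, ha, haeq⟩
      rwa [← f.injective haeq]
    · rintro ⟨e0, ⟨he0, hv⟩, rfl⟩
      exact ⟨⟨e0, he0, rfl⟩, Sym2.mem_map.2 ⟨v, hv, rfl⟩⟩
  rw [himg, Set.ncard_image_of_injective _ (Sym2.map.injective f.injective)]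

lemma irr_map {V' : Type*} (k : ℕ) (f : V ≃ V') {E : Set (Sym2 V)}
    (h : IsLocallyKIrregularPart k E) : IsLocallyKIrregularPart k (Sym2.map f '' E) := by
  intro u' v' hmem
  have hu := partDeg_map f E (f.symm u')
  have hv := partDeg_map f E (f.symm v')
  rw [f.apply_symm_apply] at hu hv
  rw [hu, hv]
  apply h
  obtain ⟨e0, he0, heq⟩ := hmem
  have : e0 = s(f.symm u', f.symm v') := by
    have h2 := congrArg (Sym2.map f.symm) heq
    rw [Sym2.map_pair_eq] at h2
    rw [← h2]
    induction e0 with | _ x y => simp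
  rwa [this] at he0

/-! ### The construction -/

inductive Wv (k : ℕ) : Type where
  | hub : Fin 4 → Wv k
  | av : Fin 4 → Fin k → Wv k
  | cv : Fin 4 → Fin 4 → Wv k
  | pd : Fin 4 → Fin k → Fin (k - 3) → Wv k
  deriving DecidableEq, Fintype

def Rv (k : ℕ) : Wv k → Wv k → Prop
  | .hub s, .av t _ => s = t
  | .av s _, .cv p q => p < q ∧ (s = p ∨ s = q)
  | .av s i, .pd t j _ => s = t ∧ i = j
  | _, _ => False

def myG (k : ℕ) : SimpleGraph (Wv k) := SimpleGraph.fromRel (Rv k)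

lemma adj_hub {k} {s : Fin 4} {w : Wv k} :
    (myG k).Adj (.hub s) w ↔ ∃ i, w = .av s i := by
  rw [myG, SimpleGraph.fromRel_adj]
  constructor
  · rintro ⟨hne, h | h⟩ <;> cases w <;> simp_all [Rv]
  · rintro ⟨i, rfl⟩
    exact ⟨by simp, Or.inl rfl⟩

lemma adj_av {k} {s : Fin 4} {i : Fin k} {w : Wv k} :
    (myG k).Adj (.av s i) w ↔
      (w = .hub s ∨ (∃ p q, w = .cv p q ∧ p < q ∧ (s = p ∨ s = q)) ∨ ∃ m, w = .pd s i m) := by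
  rw [myG, SimpleGraph.fromRel_adj]
  constructor
  · rintro ⟨hne, h | h⟩ <;> cases w <;> simp_all [Rv] <;> aesop
  · rintro (rfl | ⟨p, q, rfl, h1, h2⟩ | ⟨m, rfl⟩)
    · exact ⟨by simp, Or.inr rfl⟩
    · exact ⟨by simp, Or.inl ⟨h1, h2⟩⟩
    · exact ⟨by simp, Or.inl ⟨rfl, rfl⟩⟩

lemma adj_cv {k} {p q : Fin 4} {w : Wv k} (h : (myG k).Adj (.cv p q) w) :
    ∃ t i, w = Wv.av t i ∧ (t = p ∨ t = q) := by
  rw [myG, SimpleGraph.fromRel_adj] at h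
  obtain ⟨hne, h | h⟩ := h <;> cases w <;> simp_all [Rv] <;> tauto

lemma adj_has_av {k} {x y : Wv k} (h : (myG k).Adj x y) :
    ∃ s i, x = Wv.av s i ∨ y = Wv.av s i := by
  rw [myG, SimpleGraph.fromRel_adj] at h
  obtain ⟨hne, h | h⟩ := h <;> cases x <;> cases y <;> simp_all [Rv] <;> aesop

lemma not_adj_av_av {k} {s t : Fin 4} {i j : Fin k} :
    ¬ (myG k).Adj (.av s i) (.av t j) := by
  rw [myG, SimpleGraph.fromRel_adj]
  rintro ⟨hne, h | h⟩ <;> exact h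

lemma nbr_hub {k} (s : Fin 4) :
    (myG k).neighborSet (.hub s) = Set.range (Wv.av s) := by
  ext w; simp [SimpleGraph.mem_neighborSet, adj_hub, Set.range, eq_comm]

lemma ncard_range_of_injective {α β : Type*} (f : α → β) (h : Function.Injective f) :
    (Set.range f).ncard = Nat.card α := by
  rw [← Set.image_univ, Set.ncard_image_of_injective _ h, Set.ncard_univ]

lemma ncard_nbr_hub {k} (s : Fin 4) : ((myG k).neighborSet (.hub s)).ncard = k := by
  rw [nbr_hub, ncard_range_of_injective _ (fun a b h => by simpa using h)]
  simp

lemma ncard_nbr_cv {k} (p q : Fin 4) : ((myG k).neighborSet (.cv p q)).ncard ≤ 2 * k := by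
  have hsub : (myG k).neighborSet (.cv p q) ⊆ Set.range (Wv.av p) ∪ Set.range (Wv.av q) := by
    intro w hw
    obtain ⟨t, i, rfl, ht | ht⟩ := adj_cv hw <;> subst ht
    · exact Or.inl ⟨i, rfl⟩
    · exact Or.inr ⟨i, rfl⟩
  calc ((myG k).neighborSet (.cv p q)).ncard ≤ _ := Set.ncard_le_ncard hsub (Set.toFinite _)
    _ ≤ (Set.range (Wv.av p)).ncard + (Set.range (Wv.av q)).ncard := Set.ncard_union_le _ _
    _ = 2 * k := by
        rw [ncard_range_of_injective _ (fun a b h => by simpa using h),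
          ncard_range_of_injective _ (fun a b h => by simpa using h)]
        simp; ring

def cvf (k : ℕ) (s t : Fin 4) : Wv k := if s < t then .cv s t else .cv t s

lemma adj_av_cvf {k} (s t : Fin 4) (i : Fin k) (h : t ≠ s) : (myG k).Adj (.av s i) (cvf k s t) := by
  rw [adj_av]
  unfold cvf
  rcases lt_or_gt_of_ne (Ne.symm h) with hlt | hlt
  · rw [if_pos hlt]; exact Or.inr (Or.inl ⟨s, t, rfl, hlt, Or.inl rfl⟩)
  · rw [if_neg (by omega)]; exact Or.inr (Or.inl ⟨t, s, rfl, hlt, Or.inr rfl⟩)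

lemma cvf_comm {k} {s t : Fin 4} (h : s ≠ t) : cvf k s t = cvf k t s := by
  unfold cvf
  rcases lt_or_gt_of_ne h with h1 | h1
  · rw [if_pos h1, if_neg (by omega)]
  · rw [if_neg (by omega), if_pos h1]

lemma cvf_ne_av {k} (s t p : Fin 4) (i : Fin k) : cvf k s t ≠ Wv.av p i := by
  unfold cvf; split <;> simp

lemma nbr_av {k} (s : Fin 4) (i : Fin k) :
    (myG k).neighborSet (.av s i) =
      {Wv.hub s} ∪ cvf k s '' {t | t ≠ s} ∪ Set.range (Wv.pd s i) := by
  ext w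
  simp only [SimpleGraph.mem_neighborSet, adj_av, Set.mem_union, Set.mem_singleton_iff,
    Set.mem_image, Set.mem_setOf_eq, Set.mem_range]
  constructor
  · rintro (rfl | ⟨p, q, rfl, h1, (rfl | rfl)⟩ | ⟨m, rfl⟩)
    · exact Or.inl (Or.inl rfl)
    · refine Or.inl (Or.inr ⟨q, by omega, ?_⟩)
      unfold cvf; rw [if_pos h1]
    · refine Or.inl (Or.inr ⟨p, by omega, ?_⟩)
      unfold cvf; rw [if_neg (by omega)]
    · exact Or.inr ⟨m, rfl⟩
  · rintro ((rfl | ⟨t, ht, rfl⟩) | ⟨m, rfl⟩)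
    · exact Or.inl rfl
    · have := adj_av_cvf s t i ht
      rw [adj_av] at this
      exact this
    · exact Or.inr (Or.inr ⟨m, rfl⟩)

lemma cvf_injOn {k} (s : Fin 4) : Set.InjOn (cvf k s) {t | t ≠ s} := by
  intro a ha b hb h
  have has : a ≠ s := ha
  have hbs : b ≠ s := hb
  unfold cvf at h
  rcases lt_or_gt_of_ne (Ne.symm has) with h1 | h1 <;>
    rcases lt_or_gt_of_ne (Ne.symm hbs) with h2 | h2
  · rw [if_pos h1, if_pos h2] at h; injection h with e1 e2
  · rw [if_pos h1, if_neg (by omega)] at h; injection h with e1 e2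
    exact absurd e1.symm (by omega)
  · rw [if_neg (by omega), if_pos h2] at h; injection h with e1 e2
    exact absurd e2 (by omega)
  · rw [if_neg (by omega), if_neg (by omega)] at h; injection h with e1 e2

lemma ncard_ne_set (s : Fin 4) : ({t : Fin 4 | t ≠ s}).ncard = 3 := by
  rw [Set.ncard_eq_toFinset_card']
  fin_cases s <;> decide

lemma ncard_nbr_av {k} (hk : 4 ≤ k) (s : Fin 4) (i : Fin k) :
    ((myG k).neighborSet (.av s i)).ncard = k + 1 := by
  rw [nbr_av]
  have d1 : Disjoint ({Wv.hub s} : Set (Wv k)) (cvf k s '' {t | t ≠ s}) := by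
    rw [Set.disjoint_left]
    rintro x rfl ⟨t, ht, hx⟩
    unfold cvf at hx
    split at hx <;> exact absurd hx (by simp)
  have d2 : Disjoint (({Wv.hub s} : Set (Wv k)) ∪ cvf k s '' {t | t ≠ s})
      (Set.range (Wv.pd s i)) := by
    rw [Set.disjoint_right]
    rintro x ⟨m, rfl⟩ (h | ⟨t, ht, hx⟩)
    · simp at h
    · unfold cvf at hx
      split at hx <;> exact absurd hx (by simp)
  rw [Set.ncard_union_eq d2 (Set.toFinite _) (Set.toFinite _),
    Set.ncard_union_eq d1 (Set.toFinite _) (Set.toFinite _),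
    Set.ncard_singleton, Set.ncard_image_of_injOn (cvf_injOn s), ncard_ne_set,
    ncard_range_of_injective _ (fun a b h => by simpa using h)]
  simp only [Nat.card_eq_fintype_card, Fintype.card_fin]
  omega

lemma inc_hub {k} (s : Fin 4) : ((myG k).incidenceSet (.hub s)).ncard = k := by
  rw [ncard_incidenceSet, ncard_nbr_hub]

lemma inc_av {k} (hk : 4 ≤ k) (s : Fin 4) (i : Fin k) :
    ((myG k).incidenceSet (.av s i)).ncard = k + 1 := by
  rw [ncard_incidenceSet, ncard_nbr_av hk]

lemma inc_cvf_le {k} (s t : Fin 4) : ((myG k).incidenceSet (cvf k s t)).ncard ≤ 2 * k := by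
  unfold cvf
  split <;> rw [ncard_incidenceSet] <;> exact ncard_nbr_cv _ _

/-! ### Existence of a decomposition -/

lemma exists_decomp (k : ℕ) (hk : 4 ≤ k) :
    (⋃ si : Fin 4 × Fin k, (myG k).incidenceSet (.av si.1 si.2)) = (myG k).edgeSet ∧
    (∀ a b : Fin 4 × Fin k, a ≠ b →
      Disjoint ((myG k).incidenceSet (.av a.1 a.2)) ((myG k).incidenceSet (.av b.1 b.2))) ∧
    (∀ si : Fin 4 × Fin k, IsLocallyKIrregularPart k ((myG k).incidenceSet (.av si.1 si.2))) := by
  refine ⟨?_, ?_, ?_⟩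
  · apply Set.Subset.antisymm
    · exact Set.iUnion_subset fun si => (myG k).incidenceSet_subset _
    · intro e he
      induction e with
      | _ x y =>
        have hadj : (myG k).Adj x y := (SimpleGraph.mem_edgeSet _).1 he
        obtain ⟨s, i, h | h⟩ := adj_has_av hadj
        · exact Set.mem_iUnion.2 ⟨(s, i), he, h ▸ Sym2.mem_mk_left x y⟩
        · exact Set.mem_iUnion.2 ⟨(s, i), he, h ▸ Sym2.mem_mk_right x y⟩
  · intro a b hab
    rw [Set.disjoint_left]
    rintro e ⟨he, hea⟩ ⟨_, heb⟩
    have hne : (Wv.av a.1 a.2 : Wv k) ≠ Wv.av b.1 b.2 := by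
      intro h
      injection h with h1 h2
      exact hab (Prod.ext h1 h2)
    have := sym2_eq_of_mem hea heb hne
    rw [this] at he
    exact not_adj_av_av ((SimpleGraph.mem_edgeSet _).1 he)
  · rintro ⟨s, i⟩ u v ⟨he, hin⟩
    have hadj : (myG k).Adj u v := (SimpleGraph.mem_edgeSet _).1 he
    have hdself := partDeg_incidence_self (myG k) (Wv.av s i : Wv k)
    rw [inc_av hk] at hdself
    rcases Sym2.mem_iff.1 hin with h | h
    · subst h
      rw [hdself, partDeg_incidence_other _ hadj]
      push_cast
      rw [abs_of_nonneg (by omega)]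
      omega
    · subst h
      rw [hdself, partDeg_incidence_other _ hadj.symm]
      push_cast
      rw [abs_of_nonpos (by omega)]
      omega

/-! ### Lower bound: every decomposition has at least 4k parts -/

lemma lower_bound (k : ℕ) (hk : 4 ≤ k) (t : ℕ) (P : Fin t → Set (Sym2 (Wv k)))
    (hU : (⋃ i, P i) = (myG k).edgeSet)
    (hD : ∀ i j, i ≠ j → Disjoint (P i) (P j))
    (hI : ∀ i, IsLocallyKIrregularPart k (P i)) : 4 * k ≤ t := by
  have hsub : ∀ idx, P idx ⊆ (myG k).edgeSet := by
    intro idx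
    rw [← hU]
    exact Set.subset_iUnion P idx
  -- the hub edges
  have hedge : ∀ (s : Fin 4) (i : Fin k), s(Wv.hub s, Wv.av s i) ∈ (myG k).edgeSet := by
    intro s i
    exact (SimpleGraph.mem_edgeSet _).2 (adj_hub.2 ⟨i, rfl⟩)
  have hmem : ∀ (s : Fin 4) (i : Fin k), ∃ idx, s(Wv.hub s, Wv.av s i) ∈ P idx := by
    intro s i
    have := hedge s i
    rw [← hU] at this
    exact Set.mem_iUnion.1 this
  choose φ hφ using hmem
  -- key facts about a part containing a hub edge
  have key1 : ∀ (idx) (s : Fin 4) (i : Fin k), s(Wv.hub s, Wv.av s i) ∈ P idx →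
      partDeg (P idx) (Wv.av s i) = k + 1 := by
    intro idx s i hmem'
    have hirr := hI idx (Wv.hub s) (Wv.av s i) hmem'
    have hub_le : partDeg (P idx) (Wv.hub s) ≤ k := by
      have := partDeg_le_incidence (hsub idx) (Wv.hub s : Wv k)
      rwa [inc_hub] at this
    have hub_ge : 1 ≤ partDeg (P idx) (Wv.hub s) :=
      one_le_partDeg hmem' (Sym2.mem_mk_left _ _)
    have av_ge : 1 ≤ partDeg (P idx) (Wv.av s i) :=
      one_le_partDeg hmem' (Sym2.mem_mk_right _ _)
    have av_le : partDeg (P idx) (Wv.av s i) ≤ k + 1 := by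
      have := partDeg_le_incidence (hsub idx) (Wv.av s i : Wv k)
      rwa [inc_av hk] at this
    rcases le_abs.1 hirr with habs | habs <;> omega
  have key2 : ∀ (idx) (s : Fin 4) (i : Fin k), s(Wv.hub s, Wv.av s i) ∈ P idx →
      (myG k).incidenceSet (Wv.av s i) ⊆ P idx := by
    intro idx s i hmem'
    apply incidence_subset_of_partDeg (hsub idx)
    rw [inc_av hk, key1 idx s i hmem']
  -- injectivity of φ
  have hinj : Function.Injective (fun si : Fin 4 × Fin k => φ si.1 si.2) := by
    rintro ⟨s, i⟩ ⟨s', i'⟩ heq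
    simp only at heq
    by_contra hne
    have h1 : s(Wv.hub s, Wv.av s i) ∈ P (φ s i) := hφ s i
    have h2 : s(Wv.hub s', Wv.av s' i') ∈ P (φ s i) := heq ▸ hφ s' i'
    by_cases hss : s = s'
    · subst hss
      have hii : i ≠ i' := fun h => hne (by rw [h])
      have hene : s(Wv.hub s, Wv.av s i) ≠ s(Wv.hub s, Wv.av s i') := by
        simp only [ne_eq, Sym2.eq_iff]
        rintro (⟨-, h⟩ | ⟨h, -⟩)
        · injection h with _ h'; exact hii h'
        · exact absurd h (by simp)
      have hub2 : 2 ≤ partDeg (P (φ s i)) (Wv.hub s) :=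
        two_le_partDeg h1 h2 hene (Sym2.mem_mk_left _ _) (Sym2.mem_mk_left _ _)
      have hub_le : partDeg (P (φ s i)) (Wv.hub s) ≤ k := by
        have := partDeg_le_incidence (hsub (φ s i)) (Wv.hub s : Wv k)
        rwa [inc_hub] at this
      have av_eq := key1 (φ s i) s i h1
      have hirr := hI (φ s i) (Wv.hub s) (Wv.av s i) h1
      rw [av_eq] at hirr
      rcases le_abs.1 hirr with habs | habs <;> omega
    · -- different hubs: use the common cv vertex
      set idx := φ s i
      set c := cvf k s s' with hc
      have e1 : s(Wv.av s i, c) ∈ P idx := by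
        apply key2 idx s i h1
        exact (SimpleGraph.mem_incidenceSet _ _ _).2 (adj_av_cvf s s' i (Ne.symm hss))
      have e2 : s(Wv.av s' i', c) ∈ P idx := by
        apply key2 idx s' i' h2
        rw [hc, cvf_comm hss]
        exact (SimpleGraph.mem_incidenceSet _ _ _).2 (adj_av_cvf s' s i' hss)
      have hene : s(Wv.av s i, c) ≠ s(Wv.av s' i', c) := by
        simp only [ne_eq, Sym2.eq_iff]
        rintro (⟨h, -⟩ | ⟨h, -⟩)
        · injection h with h' _; exact hss h'
        · exact (cvf_ne_av s s' s i).elim (by rw [← hc, h])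
      have hc2 : 2 ≤ partDeg (P idx) c :=
        two_le_partDeg e1 e2 hene (Sym2.mem_mk_right _ _) (Sym2.mem_mk_right _ _)
      have hcle : partDeg (P idx) c ≤ 2 * k := by
        have := partDeg_le_incidence (hsub idx) c
        exact this.trans (inc_cvf_le s s')
      have av_eq := key1 idx s i h1
      have hirr := hI idx (Wv.av s i) c e1
      rw [av_eq] at hirr
      rcases le_abs.1 hirr with habs | habs <;> omega
  have := Fintype.card_le_of_injective _ hinj
  simpa using this


/-- there is a finite graph, decomposable into locally k-irregular parts, every
such decomposition of which has at least 4k parts; hence h(k) ≥ 4k. -/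
theorem stmt_14 (k : ℕ) (hk : 4 ≤ k) :
    ∃ (n : ℕ) (G : SimpleGraph (Fin n)),
      (∃ (t : ℕ) (P : Fin t → Set (Sym2 (Fin n))),
        (⋃ i, P i) = G.edgeSet ∧
        (∀ i j, i ≠ j → Disjoint (P i) (P j)) ∧
        ∀ i, IsLocallyKIrregularPart k (P i)) ∧
      ∀ (t : ℕ) (P : Fin t → Set (Sym2 (Fin n))),
        (⋃ i, P i) = G.edgeSet →
        (∀ i j, i ≠ j → Disjoint (P i) (P j)) →
        (∀ i, IsLocallyKIrregularPart k (P i)) →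
        4 * k ≤ t := by
  classical
  set n := Fintype.card (Wv k) with hn
  set ε : Wv k ≃ Fin n := Fintype.equivFin (Wv k) with hε
  refine ⟨n, (myG k).map ε.toEmbedding, ?_, ?_⟩
  · obtain ⟨hU, hD, hI⟩ := exists_decomp k hk
    refine ⟨4 * k, fun j => Sym2.map ε '' ((myG k).incidenceSet
      (.av (finProdFinEquiv.symm j).1 (finProdFinEquiv.symm j).2)), ?_, ?_, ?_⟩
    · have hre : (⋃ j : Fin (4 * k), (myG k).incidenceSet
          (.av (finProdFinEquiv.symm j).1 (finProdFinEquiv.symm j).2))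
          = ⋃ si : Fin 4 × Fin k, (myG k).incidenceSet (.av si.1 si.2) := by
        apply Set.Subset.antisymm
        · exact Set.iUnion_subset fun j => Set.subset_iUnion
            (fun si : Fin 4 × Fin k => (myG k).incidenceSet (.av si.1 si.2))
            (finProdFinEquiv.symm j)
        · refine Set.iUnion_subset fun si e he => ?_
          refine Set.mem_iUnion.2 ⟨finProdFinEquiv si, ?_⟩
          simpa using he
      rw [← Set.image_iUnion, hre, hU, edgeSet_map_eq]
      simp only [Equiv.coe_toEmbedding]
    · intro i j hij
      refine (Set.disjoint_image_iff (Sym2.map.injective ε.injective)).2 ?_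
      exact hD _ _ fun h => hij ((Equiv.injective _) h)
    · intro j
      exact irr_map k ε (hI _)
  · intro t P' hU hD hI
    apply lower_bound k hk t (fun j => Sym2.map ε.symm '' P' j)
    · rw [← Set.image_iUnion, hU, edgeSet_map_eq]
      simp only [Equiv.coe_toEmbedding]
      have h := sym2_map_symm_image ε.symm ((myG k).edgeSet)
      rw [Equiv.symm_symm] at h
      exact h
    · intro i j hij
      exact (Set.disjoint_image_iff (Sym2.map.injective ε.symm.injective)).2 (hD i j hij)
    · intro j
      exact irr_map k ε.symm (hI j)
end

section
/- Let G be a finite 3-regular graph. Then G has an edge-labeling ℓ : E(G) → {1,2} such that for every edge uv the sum of the labels of the edges incident to u differs from the sum of the labels of the edges incident to v, if and only if E(G) can be partitioned into at most two locally irregular parts. -/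
open SimpleGraph

variable {V : Type*}

open scoped Classical in
lemma partDeg_eq [Fintype V] [DecidableEq V] (E : Set (Sym2 V)) (v : V) :
    partDeg E v = (Finset.univ.filter (fun e => e ∈ E ∧ v ∈ e)).card := by
  rw [partDeg, ← Set.ncard_coe_finset]
  congr 1
  ext e
  simp

lemma mk_inj (u : V) : Function.Injective (fun w => s(u, w)) := by
  intro a b h
  simp only [Sym2.eq, Sym2.rel_iff', Prod.mk.injEq, Prod.swap_prod_mk] at h
  rcases h with ⟨_, rfl⟩ | ⟨rfl, rfl⟩ <;> rfl

open scoped Classical in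
lemma inc_eq [Fintype V] [DecidableEq V] (G : SimpleGraph V) [DecidableRel G.Adj] (u : V) :
    (Finset.univ.filter (fun e => e ∈ G.edgeSet ∧ u ∈ e)) =
      (G.neighborFinset u).image (fun w => s(u, w)) := by
  ext e
  simp only [Finset.mem_filter, Finset.mem_univ, true_and, Finset.mem_image,
    mem_neighborFinset]
  induction e using Sym2.ind with
  | _ a b =>
    constructor
    · rintro ⟨he, hu⟩
      rw [mem_edgeSet] at he
      rcases Sym2.mem_iff.mp hu with rfl | rfl
      · exact ⟨b, he, rfl⟩
      · exact ⟨a, G.adj_symm he, Sym2.eq_swap⟩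
    · rintro ⟨w, hadj, h⟩
      rw [← h]
      exact ⟨G.mem_edgeSet.mpr hadj, Sym2.mem_mk_left u w⟩

open scoped Classical in
lemma inc_split [Fintype V] [DecidableEq V] (G : SimpleGraph V) [DecidableRel G.Adj]
    (E₁ E₂ : Set (Sym2 V)) (hU : E₁ ∪ E₂ = G.edgeSet) (u : V) :
    (Finset.univ.filter (fun e => e ∈ G.edgeSet ∧ u ∈ e)) =
      (Finset.univ.filter (fun e => e ∈ E₁ ∧ u ∈ e)) ∪
      (Finset.univ.filter (fun e => e ∈ E₂ ∧ u ∈ e)) := by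
  ext e
  simp only [Finset.mem_filter, Finset.mem_univ, true_and, Finset.mem_union, ← hU,
    Set.mem_union]
  tauto

open scoped Classical in
lemma inc_disj [Fintype V] [DecidableEq V] (E₁ E₂ : Set (Sym2 V)) (hD : Disjoint E₁ E₂) (u : V) :
    Disjoint (Finset.univ.filter (fun e => e ∈ E₁ ∧ u ∈ e))
      (Finset.univ.filter (fun e => e ∈ E₂ ∧ u ∈ e)) := by
  rw [Finset.disjoint_left]
  intro e he1 he2
  simp only [Finset.mem_filter, Finset.mem_univ, true_and] at he1 he2
  exact Set.disjoint_left.mp hD he1.1 he2.1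

open scoped Classical in
lemma key_count [Fintype V] [DecidableEq V] (G : SimpleGraph V) [DecidableRel G.Adj]
    (hreg : ∀ v : V, G.degree v = 3)
    (E₁ E₂ : Set (Sym2 V)) (hU : E₁ ∪ E₂ = G.edgeSet) (hD : Disjoint E₁ E₂) (u : V) :
    partDeg E₁ u + partDeg E₂ u = 3 := by
  rw [partDeg_eq, partDeg_eq, ← Finset.card_union_of_disjoint (inc_disj E₁ E₂ hD u),
    ← inc_split G E₁ E₂ hU u, inc_eq G u,
    Finset.card_image_of_injective _ (mk_inj u), card_neighborFinset_eq_degree, hreg]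

open scoped Classical in
lemma key_sum [Fintype V] [DecidableEq V] (G : SimpleGraph V) [DecidableRel G.Adj]
    (E₁ E₂ : Set (Sym2 V)) (hU : E₁ ∪ E₂ = G.edgeSet) (hD : Disjoint E₁ E₂)
    (ℓ : Sym2 V → ℕ) (h1 : ∀ e ∈ E₁, ℓ e = 1) (h2 : ∀ e ∈ E₂, ℓ e = 2) (u : V) :
    (∑ w ∈ G.neighborFinset u, ℓ s(u, w)) = partDeg E₁ u + 2 * partDeg E₂ u := by
  have : (∑ w ∈ G.neighborFinset u, ℓ s(u, w)) =
      ∑ e ∈ Finset.univ.filter (fun e => e ∈ G.edgeSet ∧ u ∈ e), ℓ e := by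
    rw [inc_eq G u, Finset.sum_image (fun a _ b _ h => mk_inj u h)]
  rw [this, inc_split G E₁ E₂ hU u, Finset.sum_union (inc_disj E₁ E₂ hD u),
    partDeg_eq, partDeg_eq]
  have hs1 : ∑ e ∈ Finset.univ.filter (fun e => e ∈ E₁ ∧ u ∈ e), ℓ e =
      (Finset.univ.filter (fun e => e ∈ E₁ ∧ u ∈ e)).card := by
    rw [Finset.card_eq_sum_ones]
    refine Finset.sum_congr rfl fun e he => ?_
    simp only [Finset.mem_filter] at he
    exact h1 e he.2.1
  have hs2 : ∑ e ∈ Finset.univ.filter (fun e => e ∈ E₂ ∧ u ∈ e), ℓ e =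
      2 * (Finset.univ.filter (fun e => e ∈ E₂ ∧ u ∈ e)).card := by
    rw [Finset.sum_congr rfl fun e he => h2 e (by
        simpa using (Finset.mem_filter.mp he).2.1 : e ∈ E₂)]
    simp [mul_comm]
  rw [hs1, hs2]

/-- a finite 3-regular graph has an edge labeling from {1,2} whose incident sums
distinguish adjacent vertices iff its edge set can be partitioned into at most two locally
irregular parts. -/
theorem stmt_17 {V : Type*} [Fintype V] [DecidableEq V] (G : SimpleGraph V)
    [DecidableRel G.Adj] (hreg : ∀ v : V, G.degree v = 3) :
    (∃ ℓ : Sym2 V → ℕ,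
        (∀ e ∈ G.edgeSet, ℓ e = 1 ∨ ℓ e = 2) ∧
        ∀ u v : V, G.Adj u v →
          (∑ w ∈ G.neighborFinset u, ℓ s(u, w)) ≠ ∑ w ∈ G.neighborFinset v, ℓ s(v, w)) ↔
      (∃ E₁ E₂ : Set (Sym2 V),
        E₁ ∪ E₂ = G.edgeSet ∧ Disjoint E₁ E₂ ∧
        IsLocallyIrregularPart E₁ ∧ IsLocallyIrregularPart E₂) := by
  constructor
  · rintro ⟨ℓ, hlab, hsum⟩
    refine ⟨{e | e ∈ G.edgeSet ∧ ℓ e = 1}, {e | e ∈ G.edgeSet ∧ ℓ e ≠ 1}, ?_, ?_, ?_, ?_⟩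
    · ext e
      simp only [Set.mem_union, Set.mem_setOf_eq]
      tauto
    · rw [Set.disjoint_left]
      rintro e ⟨_, h1⟩ ⟨_, h2⟩
      exact h2 h1
    all_goals {
      intro u v huv heq
      have hU : {e | e ∈ G.edgeSet ∧ ℓ e = 1} ∪ {e | e ∈ G.edgeSet ∧ ℓ e ≠ 1} = G.edgeSet := by
        ext e; simp only [Set.mem_union, Set.mem_setOf_eq]; tauto
      have hD : Disjoint {e | e ∈ G.edgeSet ∧ ℓ e = 1} {e | e ∈ G.edgeSet ∧ ℓ e ≠ 1} := by
        rw [Set.disjoint_left]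
        rintro e ⟨_, h1⟩ ⟨_, h2⟩
        exact h2 h1
      have h1 : ∀ e ∈ {e | e ∈ G.edgeSet ∧ ℓ e = 1}, ℓ e = 1 := fun e he => he.2
      have h2 : ∀ e ∈ {e | e ∈ G.edgeSet ∧ ℓ e ≠ 1}, ℓ e = 2 := by
        rintro e ⟨he, hne⟩
        rcases hlab e he with h | h
        · exact absurd h hne
        · exact h
      have hadj : G.Adj u v := G.mem_edgeSet.mp huv.1
      have hs := hsum u v hadj
      rw [key_sum G _ _ hU hD ℓ h1 h2 u, key_sum G _ _ hU hD ℓ h1 h2 v] at hs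
      have cu := key_count G hreg _ _ hU hD u
      have cv := key_count G hreg _ _ hU hD v
      omega
    }
  · rintro ⟨E₁, E₂, hU, hD, hI1, hI2⟩
    classical
    refine ⟨fun e => if e ∈ E₁ then 1 else 2, ?_, ?_⟩
    · intro e he
      by_cases h : e ∈ E₁ <;> simp [h]
    · intro u v hadj
      have h1 : ∀ e ∈ E₁, (fun e => if e ∈ E₁ then 1 else 2) e = 1 := by
        intro e he; simp [he]
      have h2 : ∀ e ∈ E₂, (fun e => if e ∈ E₁ then 1 else 2) e = 2 := by
        intro e he
        have : e ∉ E₁ := fun h => Set.disjoint_left.mp hD h he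
        simp [this]
      rw [key_sum G E₁ E₂ hU hD _ h1 h2 u, key_sum G E₁ E₂ hU hD _ h1 h2 v]
      have cu := key_count G hreg E₁ E₂ hU hD u
      have cv := key_count G hreg E₁ E₂ hU hD v
      have he : s(u, v) ∈ E₁ ∪ E₂ := hU ▸ G.mem_edgeSet.mpr hadj
      rcases he with he | he
      · have := hI1 u v he
        omega
      · have := hI2 u v he
        omega
end
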